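/- Let C₁,…,C_m ∈ Mat_{n,n}(K). Order words in the alphabet [m] by length-then-lexicographic order ≺. Call a word w a non-pivot if C_w lies in the span of {C_u : u ≺ w} (with C_ε = Id). If w is a non-pivot, then for all words x, y, the concatenation xwy is also a non-pivot. -/

import Mathlib

/-- Length-then-lexicographic order on words over `Fin m`. -/
def WordLT {m : ℕ} (w₁ w₂ : List (Fin m)) : Prop :=
  w₁.length < w₂.length ∨ (w₁.length = w₂.length ∧ List.Lex (· < ·) w₁ w₂)

/-- `w` is a non-pivot if `C_w` lies in the span of the `C_u` for `u ≺ w`. -/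
def NonPivot {K : Type*} [Field K] {n m : ℕ} (C : Fin m → Matrix (Fin n) (Fin n) K)
    (w : List (Fin m)) : Prop :=
  ((w.map C).prod) ∈ Submodule.span K
    {M : Matrix (Fin n) (Fin n) K | ∃ u : List (Fin m), WordLT u w ∧ M = (u.map C).prod}

lemma lex_append_right {m : ℕ} {u w : List (Fin m)} (h : List.Lex (· < ·) u w)
    (hl : u.length = w.length) (y : List (Fin m)) :
    List.Lex (· < ·) (u ++ y) (w ++ y) := by
  induction h with
  | nil => simp at hl
  | cons h ih => exact List.Lex.cons (ih (by simpa using hl))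
  | rel h => exact List.Lex.rel h

lemma lex_append_left {m : ℕ} {u w : List (Fin m)} (h : List.Lex (· < ·) u w)
    (x : List (Fin m)) :
    List.Lex (· < ·) (x ++ u) (x ++ w) := by
  induction x with
  | nil => exact h
  | cons a x ih => exact List.Lex.cons ih

lemma wordLT_concat {m : ℕ} {u w : List (Fin m)} (h : WordLT u w) (x y : List (Fin m)) :
    WordLT (x ++ u ++ y) (x ++ w ++ y) := by
  rcases h with h | ⟨hl, hlex⟩
  · left; simp only [List.length_append]; omega
  · right
    refine ⟨by simp [hl], ?_⟩
    rw [List.append_assoc, List.append_assoc]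
    exact lex_append_left (lex_append_right hlex hl y) x

theorem nonPivot_concat {K : Type*} [Field K] {n m : ℕ}
    (C : Fin m → Matrix (Fin n) (Fin n) K) (w : List (Fin m))
    (hw : NonPivot C w) (x y : List (Fin m)) :
    NonPivot C (x ++ w ++ y) := by
  unfold NonPivot at hw ⊢
  set A := (x.map C).prod with hA
  set B := (y.map C).prod with hB
  let f : Matrix (Fin n) (Fin n) K →ₗ[K] Matrix (Fin n) (Fin n) K :=
    (LinearMap.mulLeft K A).comp (LinearMap.mulRight K B)
  have hmem : f ((w.map C).prod) ∈
      Submodule.map f (Submodule.span K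
        {M : Matrix (Fin n) (Fin n) K | ∃ u : List (Fin m), WordLT u w ∧ M = (u.map C).prod}) :=
    Submodule.mem_map_of_mem hw
  rw [Submodule.map_span] at hmem
  have hsub : f '' {M : Matrix (Fin n) (Fin n) K | ∃ u : List (Fin m), WordLT u w ∧ M = (u.map C).prod}
      ⊆ {M : Matrix (Fin n) (Fin n) K | ∃ u : List (Fin m), WordLT u (x ++ w ++ y) ∧ M = (u.map C).prod} := by
    rintro _ ⟨M, ⟨u, hu, rfl⟩, rfl⟩
    refine ⟨x ++ u ++ y, wordLT_concat hu x y, ?_⟩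
    simp [f, A, B, List.prod_append, mul_assoc]
  have h2 := Submodule.span_mono hsub hmem
  have heq : ((x ++ w ++ y).map C).prod = f ((w.map C).prod) := by
    simp [f, A, B, List.prod_append, mul_assoc]
  rw [heq]
  exact h2
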